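/- Let g ≥ 1 be an integer and let Z be a symmetric g×g complex matrix whose imaginary part is positive definite. Then the function ω ↦ θ(ω, Z) = ∑_{n ∈ ℤ^g} exp(π i nᵀ Z n + 2π i nᵀ ω) is complex differentiable (holomorphic) at every point ω ∈ ℂ^g. -/

import Mathlib

open scoped BigOperators


lemma one_add_sum_le_prod {ι : Type*} (s : Finset ι) (f : ι → ℝ) (hf : ∀ i, 0 ≤ f i) :
    1 + ∑ i ∈ s, f i ≤ ∏ i ∈ s, (1 + f i) := by
  classical
  induction s using Finset.induction with
  | empty => simp
  | @insert a s ha ih =>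
    rw [Finset.sum_insert ha, Finset.prod_insert ha]
    have h1 : (0:ℝ) ≤ ∑ i ∈ s, f i := Finset.sum_nonneg fun i _ => hf i
    nlinarith [hf a, ih]

lemma summable_pi_prod {φ : ℤ → ℝ} (hφ : Summable φ) (hφ0 : ∀ m, 0 ≤ φ m) (g : ℕ) :
    Summable (fun n : Fin g → ℤ => ∏ i, φ (n i)) := by
  induction g with
  | zero =>
    have : Finite (Fin 0 → ℤ) := by infer_instance
    exact Summable.of_finite
  | succ g ih =>
    have h := (hφ.mul_of_nonneg ih hφ0 (fun n => Finset.prod_nonneg fun i _ => hφ0 _))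
    rw [← (Fin.consEquiv (fun _ : Fin (g+1) => ℤ)).summable_iff]
    convert h using 1
    ext ⟨m, n⟩
    simp [Fin.consEquiv, Fin.prod_univ_succ]

lemma summable_psi {a b : ℝ} (ha : 0 < a) :
    Summable (fun m : ℤ => (1 + 2*Real.pi*|(m:ℝ)|) * Real.exp (-a * (m:ℝ)^2 + b * |(m:ℝ)|)) := by
  have pi_pos := Real.pi_pos
  have h0 := summable_pow_mul_jacobiTheta₂_term_bound (b/(2*Real.pi))
    (show 0 < a/Real.pi by positivity) 0
  have h1 := summable_pow_mul_jacobiTheta₂_term_bound (b/(2*Real.pi))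
    (show 0 < a/Real.pi by positivity) 1
  refine (h0.add (h1.mul_left (2*Real.pi))).congr fun m => ?_
  have harg : -Real.pi * ((a/Real.pi) * (m:ℝ)^2 - 2*(b/(2*Real.pi))*|(m:ℝ)|)
      = -a*(m:ℝ)^2 + b*|(m:ℝ)| := by field_simp; ring
  push_cast
  rw [harg]
  ring

lemma continuous_quadform {g : ℕ} (Y : Matrix (Fin g) (Fin g) ℝ) :
    Continuous (fun x : Fin g → ℝ => dotProduct x (Y.mulVec x)) := by
  have h : (fun x : Fin g → ℝ => dotProduct x (Y.mulVec x))
      = fun x => ∑ i, x i * ∑ j, Y i j * x j := by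
    funext x
    simp [dotProduct, Matrix.mulVec]
  rw [h]
  exact continuous_finset_sum _ fun i _ => (continuous_apply i).mul
    (continuous_finset_sum _ fun j _ => continuous_const.mul (continuous_apply j))

lemma posdef_bound {g : ℕ} (hg : 1 ≤ g) {Y : Matrix (Fin g) (Fin g) ℝ} (hY : Y.PosDef) :
    ∃ c > 0, ∀ x : Fin g → ℝ, c * ‖x‖^2 ≤ dotProduct x (Y.mulVec x) := by
  have hne : Nonempty (Fin g) := ⟨⟨0, hg⟩⟩
  have hx₁ : (fun _ : Fin g => (1:ℝ)) ∈ Metric.sphere (0 : Fin g → ℝ) 1 := by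
    simp [mem_sphere_iff_norm, pi_norm_const]
  obtain ⟨x₀, hx₀S, hmin⟩ := (isCompact_sphere (0 : Fin g → ℝ) 1).exists_isMinOn
    ⟨_, hx₁⟩ (continuous_quadform Y).continuousOn
  have hx₀norm : ‖x₀‖ = 1 := by simpa [mem_sphere_iff_norm] using hx₀S
  have hx₀ne : x₀ ≠ 0 := by
    intro h; rw [h, norm_zero] at hx₀norm; norm_num at hx₀norm
  have hc : 0 < dotProduct x₀ (Y.mulVec x₀) := by
    have := hY.dotProduct_mulVec_pos hx₀ne
    simpa using this
  refine ⟨_, hc, fun x => ?_⟩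
  rcases eq_or_ne x 0 with rfl | hx
  · simp [Matrix.mulVec_zero]
  · have hnx : (0:ℝ) < ‖x‖ := norm_pos_iff.mpr hx
    set y : Fin g → ℝ := ‖x‖⁻¹ • x with hy
    have hyS : y ∈ Metric.sphere (0 : Fin g → ℝ) 1 := by
      simp [hy, mem_sphere_iff_norm, norm_smul, abs_of_pos (inv_pos.mpr hnx),
        inv_mul_cancel₀ hnx.ne']
    have hxy : x = ‖x‖ • y := by
      rw [hy, smul_smul, mul_inv_cancel₀ hnx.ne', one_smul]
    have hscale : dotProduct x (Y.mulVec x)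
        = ‖x‖^2 * dotProduct y (Y.mulVec y) := by
      conv_lhs => rw [hxy]
      rw [Matrix.mulVec_smul, smul_dotProduct, dotProduct_smul,
        smul_eq_mul, smul_eq_mul]
      ring
    have hminy := hmin hyS
    rw [hscale]
    have h2 : (0:ℝ) ≤ ‖x‖^2 := sq_nonneg _
    calc dotProduct x₀ (Y.mulVec x₀) * ‖x‖^2
        ≤ dotProduct y (Y.mulVec y) * ‖x‖^2 := by
          exact mul_le_mul_of_nonneg_right hminy h2
      _ = ‖x‖^2 * dotProduct y (Y.mulVec y) := mul_comm _ _

lemma dot_im {g : ℕ} (n : Fin g → ℤ) (w : Fin g → ℂ) :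
    (dotProduct (fun i => (n i : ℂ)) w).im = ∑ i, (n i : ℝ) * (w i).im := by
  simp [dotProduct, Complex.im_sum, Complex.mul_im]

lemma quad_im {g : ℕ} (Z : Matrix (Fin g) (Fin g) ℂ) (n : Fin g → ℤ) :
    (dotProduct (fun i => (n i : ℂ)) (Z.mulVec fun i => (n i : ℂ))).im
      = dotProduct (fun i => (n i : ℝ)) ((Z.map Complex.im).mulVec fun i => (n i : ℝ)) := by
  simp only [dotProduct, Matrix.mulVec, Matrix.map_apply, Complex.im_sum,
    Complex.mul_im, Complex.intCast_re, Complex.intCast_im, zero_mul, add_zero,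
    mul_zero, zero_add]

lemma term_re (q d : ℂ) :
    ((Real.pi : ℂ) * Complex.I * q + 2 * (Real.pi:ℂ) * Complex.I * d).re
      = -Real.pi * q.im - 2 * Real.pi * d.im := by
  simp only [Complex.add_re, Complex.mul_re, Complex.mul_im, Complex.I_re, Complex.I_im,
    Complex.ofReal_re, Complex.ofReal_im, Complex.re_ofNat, Complex.im_ofNat]
  ring



/-- The Riemann theta function `θ(ω, Z) = ∑_{n ∈ ℤ^g} exp(π i nᵀ Z n + 2π i nᵀ ω)`. -/
noncomputable def riemannTheta {g : ℕ} (ω : Fin g → ℂ) (Z : Matrix (Fin g) (Fin g) ℂ) : ℂ :=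
  ∑' n : Fin g → ℤ,
    Complex.exp (Real.pi * Complex.I *
        dotProduct (fun i => (n i : ℂ)) (Z.mulVec fun i => (n i : ℂ)) +
      2 * Real.pi * Complex.I * dotProduct (fun i => (n i : ℂ)) ω)

set_option maxHeartbeats 1000000 in
/-- for `Z` in the Siegel upper half-space of genus `g ≥ 1`, the function
`ω ↦ θ(ω, Z)` is complex differentiable (holomorphic) at every point `ω ∈ ℂ^g`. -/
theorem riemann_theta_differentiable (g : ℕ) (hg : 1 ≤ g)
    (Z : Matrix (Fin g) (Fin g) ℂ) (hZsym : Z.IsSymm)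
    (hZpos : (Z.map Complex.im).PosDef) :
    ∀ ω : Fin g → ℂ, DifferentiableAt ℂ (fun w : Fin g → ℂ => riemannTheta w Z) ω := by
  intro ω
  classical
  have hπ := Real.pi_pos
  obtain ⟨c, hc, hquad⟩ := posdef_bound hg hZpos
  have hg0 : (0:ℝ) < (g:ℝ) := by exact_mod_cast Nat.lt_of_lt_of_le Nat.zero_lt_one hg
  set a : ℝ := Real.pi * c / (g:ℝ)^2 with ha_def
  have ha : 0 < a := by positivity
  set b : ℝ := 2 * Real.pi * (‖ω‖ + 1) with hb_def
  have hb : 0 ≤ b := by positivity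
  set N : (Fin g → ℤ) → ℝ := fun n => ∑ i, |(n i : ℝ)| with hN_def
  have hN0 : ∀ n, 0 ≤ N n := fun n => Finset.sum_nonneg fun i _ => abs_nonneg _
  set A : (Fin g → ℤ) → (Fin g → ℂ) →L[ℂ] ℂ := fun n =>
    ∑ i, (2 * (Real.pi:ℂ) * Complex.I * (n i : ℂ)) • ContinuousLinearMap.proj i with hA_def
  have hA : ∀ n (w : Fin g → ℂ), A n w
      = 2 * (Real.pi:ℂ) * Complex.I * dotProduct (fun i => (n i:ℂ)) w := by
    intro n w
    simp only [hA_def, ContinuousLinearMap.sum_apply, ContinuousLinearMap.smul_apply,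
      ContinuousLinearMap.proj_apply, smul_eq_mul, dotProduct, Finset.mul_sum]
    exact Finset.sum_congr rfl fun i _ => by ring
  set Q : (Fin g → ℤ) → ℂ := fun n => (Real.pi : ℂ) * Complex.I *
      dotProduct (fun i => (n i : ℂ)) (Z.mulVec fun i => (n i : ℂ)) with hQ_def
  set f : (Fin g → ℤ) → (Fin g → ℂ) → ℂ := fun n w => Complex.exp (Q n + A n w) with hf_def
  have hfun : (fun w : Fin g → ℂ => riemannTheta w Z) = fun w => ∑' n, f n w := by
    funext w
    refine tsum_congr fun n => ?_
    simp only [hf_def, hQ_def, hA]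
  have hnorm : ∀ n w, ‖f n w‖ = Real.exp (-Real.pi *
      dotProduct (fun i => (n i:ℝ)) ((Z.map Complex.im).mulVec fun i => (n i:ℝ))
      - 2*Real.pi * ∑ i, (n i:ℝ) * (w i).im) := by
    intro n w
    rw [hf_def]
    simp only []
    rw [Complex.norm_exp, hQ_def, hA]
    rw [term_re, quad_im, dot_im]
  set u : (Fin g → ℤ) → ℝ := fun n =>
    ∏ i, ((1 + 2*Real.pi*|((n i):ℝ)|) * Real.exp (-a*((n i):ℝ)^2 + b*|((n i):ℝ)|)) with hu_def
  have hψ0 : ∀ m : ℤ, 0 ≤ (1 + 2*Real.pi*|(m:ℝ)|) * Real.exp (-a*(m:ℝ)^2 + b*|(m:ℝ)|) :=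
    fun m => by positivity
  have hu_sum : Summable u := summable_pi_prod (summable_psi ha) hψ0 g
  have key : ∀ n, (1 + 2*Real.pi * N n) * Real.exp (-a * (N n)^2 + b * N n) ≤ u n := by
    intro n
    have h1 : 1 + 2*Real.pi*N n ≤ ∏ i, (1 + 2*Real.pi*|((n i):ℝ)|) := by
      have h := one_add_sum_le_prod Finset.univ (fun i => 2*Real.pi*|((n i):ℝ)|)
        (fun i => by positivity)
      calc 1 + 2*Real.pi*N n = 1 + ∑ i, 2*Real.pi*|((n i):ℝ)| := by
            rw [hN_def, Finset.mul_sum]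
        _ ≤ _ := h
    have h2 : Real.exp (-a*(N n)^2 + b*N n)
        ≤ ∏ i, Real.exp (-a*((n i):ℝ)^2 + b*|((n i):ℝ)|) := by
      rw [← Real.exp_sum]
      apply Real.exp_le_exp.mpr
      have hsq : ∑ i, ((n i):ℝ)^2 ≤ (N n)^2 := by
        have h := Finset.sum_sq_le_sq_sum_of_nonneg
          (s := Finset.univ) (f := fun i : Fin g => |((n i):ℝ)|) (fun i _ => abs_nonneg _)
        simpa [sq_abs] using h
      have heq : ∑ i, (-a*((n i):ℝ)^2 + b*|((n i):ℝ)|)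
          = -a * (∑ i, ((n i):ℝ)^2) + b * N n := by
        rw [Finset.sum_add_distrib, hN_def, ← Finset.mul_sum, ← Finset.mul_sum]
      rw [heq]
      have := mul_le_mul_of_nonneg_left hsq ha.le
      linarith
    have hp1 : (0:ℝ) ≤ ∏ i, (1 + 2*Real.pi*|((n i):ℝ)|) :=
      Finset.prod_nonneg fun i _ => by positivity
    calc (1 + 2*Real.pi * N n) * Real.exp (-a * (N n)^2 + b * N n)
        ≤ (∏ i, (1 + 2*Real.pi*|((n i):ℝ)|)) * ∏ i, Real.exp (-a*((n i):ℝ)^2 + b*|((n i):ℝ)|) := by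
          apply mul_le_mul h1 h2 (Real.exp_nonneg _) hp1
      _ = u n := by rw [hu_def, ← Finset.prod_mul_distrib]
  have hbound : ∀ n, ∀ w ∈ Metric.ball ω 1,
      ‖f n w‖ ≤ Real.exp (-a*(N n)^2 + b*N n) := by
    intro n w hw
    rw [hnorm n w, Real.exp_le_exp]
    have hw' : ‖w‖ ≤ ‖ω‖ + 1 := by
      have h := mem_ball_iff_norm.mp hw
      calc ‖w‖ = ‖ω + (w - ω)‖ := by rw [add_sub_cancel]
        _ ≤ ‖ω‖ + ‖w - ω‖ := norm_add_le _ _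
        _ ≤ ‖ω‖ + 1 := by linarith
    have hq : a * (N n)^2 ≤ Real.pi *
        dotProduct (fun i => ((n i):ℝ)) ((Z.map Complex.im).mulVec fun i => ((n i):ℝ)) := by
      have h1 : N n ≤ (g:ℝ) * ‖(fun i => ((n i):ℝ))‖ := by
        calc N n = ∑ i, |((n i):ℝ)| := rfl
          _ ≤ ∑ _i : Fin g, ‖(fun i => ((n i):ℝ))‖ := Finset.sum_le_sum fun i _ => by
              simpa using norm_le_pi_norm (fun i => ((n i):ℝ)) i
          _ = (g:ℝ) * ‖(fun i => ((n i):ℝ))‖ := by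
              simp [Finset.sum_const]
      have h2 : (N n)^2 ≤ (g:ℝ)^2 * ‖(fun i => ((n i):ℝ))‖^2 := by
        nlinarith [hN0 n, norm_nonneg (fun i => ((n i):ℝ))]
      have h3 := hquad (fun i => ((n i):ℝ))
      calc a * (N n)^2 ≤ a * ((g:ℝ)^2 * ‖(fun i => ((n i):ℝ))‖^2) :=
            mul_le_mul_of_nonneg_left h2 ha.le
        _ = Real.pi * (c * ‖(fun i => ((n i):ℝ))‖^2) := by
            rw [ha_def]; field_simp
        _ ≤ Real.pi * dotProduct (fun i => ((n i):ℝ))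
              ((Z.map Complex.im).mulVec fun i => ((n i):ℝ)) :=
            mul_le_mul_of_nonneg_left h3 hπ.le
    have hl : |∑ i, ((n i):ℝ) * (w i).im| ≤ N n * (‖ω‖+1) := by
      calc |∑ i, ((n i):ℝ) * (w i).im| ≤ ∑ i, |((n i):ℝ) * (w i).im| :=
            Finset.abs_sum_le_sum_abs _ _
        _ = ∑ i, |((n i):ℝ)| * |(w i).im| := by simp [abs_mul]
        _ ≤ ∑ i, |((n i):ℝ)| * (‖ω‖+1) := by
            refine Finset.sum_le_sum fun i _ => mul_le_mul_of_nonneg_left ?_ (abs_nonneg _)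
            calc |(w i).im| ≤ ‖w i‖ := Complex.abs_im_le_norm _
              _ = ‖w i‖ := rfl
              _ ≤ ‖w‖ := norm_le_pi_norm w i
              _ ≤ ‖ω‖ + 1 := hw'
        _ = N n * (‖ω‖+1) := by rw [hN_def, ← Finset.sum_mul]
    have hl' : -(N n * (‖ω‖+1)) ≤ ∑ i, ((n i):ℝ) * (w i).im := (abs_le.mp hl).1
    have hb' : b * N n = 2*Real.pi * (N n * (‖ω‖+1)) := by rw [hb_def]; ring
    have h4 := mul_le_mul_of_nonneg_left hl' (by positivity : (0:ℝ) ≤ 2*Real.pi)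
    linarith
  have hAnorm : ∀ n, ‖A n‖ ≤ 2*Real.pi*N n := by
    intro n
    refine ContinuousLinearMap.opNorm_le_bound _ (by positivity) fun v => ?_
    rw [hA]
    have hc2 : ‖(2 * (Real.pi:ℂ) * Complex.I)‖ = 2*Real.pi := by
      simp [norm_mul, Real.pi_nonneg, abs_of_nonneg]
    calc ‖2 * (Real.pi:ℂ) * Complex.I * dotProduct (fun i => ((n i):ℂ)) v‖
        = ‖(2 * (Real.pi:ℂ) * Complex.I)‖ * ‖dotProduct (fun i => ((n i):ℂ)) v‖ :=
          norm_mul _ _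
      _ = 2*Real.pi * ‖dotProduct (fun i => ((n i):ℂ)) v‖ := by rw [hc2]
      _ ≤ 2*Real.pi * (N n * ‖v‖) := by
          refine mul_le_mul_of_nonneg_left ?_ (by positivity)
          calc ‖dotProduct (fun i => ((n i):ℂ)) v‖
              ≤ ∑ i, ‖((n i):ℂ) * v i‖ := norm_sum_le _ _
            _ = ∑ i, |((n i):ℝ)| * ‖v i‖ := by
                refine Finset.sum_congr rfl fun i _ => ?_
                rw [norm_mul, Complex.norm_intCast]
            _ ≤ ∑ i, |((n i):ℝ)| * ‖v‖ := Finset.sum_le_sum fun i _ =>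
                mul_le_mul_of_nonneg_left (norm_le_pi_norm v i) (abs_nonneg _)
            _ = N n * ‖v‖ := by rw [hN_def, ← Finset.sum_mul]
      _ = 2*Real.pi*N n * ‖v‖ := by ring
  have hderiv : ∀ n (w : Fin g → ℂ), w ∈ Metric.ball ω 1 →
      HasFDerivAt (f n) (f n w • A n) w := by
    intro n w _
    have h := ((A n).hasFDerivAt (x := w)).const_add (Q n)
    exact h.cexp
  have hf'bound : ∀ n (w : Fin g → ℂ), w ∈ Metric.ball ω 1 → ‖f n w • A n‖ ≤ u n := by
    intro n w hw
    have hns : ∀ (z : ℂ) (T : (Fin g → ℂ) →L[ℂ] ℂ), ‖z • T‖ = ‖z‖ * ‖T‖ :=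
      fun z T => norm_smul z T
    rw [hns]
    calc ‖f n w‖ * ‖A n‖ ≤ Real.exp (-a*(N n)^2 + b*N n) * (2*Real.pi*N n) := by
          apply mul_le_mul (hbound n w hw) (hAnorm n) (norm_nonneg _) (Real.exp_nonneg _)
      _ ≤ (1 + 2*Real.pi * N n) * Real.exp (-a * (N n)^2 + b * N n) := by
          rw [mul_comm]
          apply mul_le_mul_of_nonneg_right ?_ (Real.exp_nonneg _)
          nlinarith [hN0 n, hπ.le]
      _ ≤ u n := key n
  have hball : ω ∈ Metric.ball ω 1 := Metric.mem_ball_self one_pos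
  have hf0 : Summable fun n => f n ω := by
    apply Summable.of_norm_bounded hu_sum
    intro n
    calc ‖f n ω‖ ≤ Real.exp (-a*(N n)^2 + b*N n) := hbound n ω hball
      _ ≤ (1 + 2*Real.pi * N n) * Real.exp (-a * (N n)^2 + b * N n) := by
          apply le_mul_of_one_le_left (Real.exp_nonneg _)
          nlinarith [hN0 n, hπ.le]
      _ ≤ u n := key n
  rw [hfun]
  exact (hasFDerivAt_tsum_of_isPreconnected hu_sum Metric.isOpen_ball
    (convex_ball ω 1).isPreconnected hderiv hf'bound hball hf0 hball).differentiableAt
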